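/- Let N ≥ 1, σ > 0, let ψ : [0,2] → ℝ be a nonnegative strictly decreasing C¹ function with ψ(2) = 0, set ψ₀ := ψ(0), ψ_{ab} := ψ(‖x_a − x_b‖), and ‖ψ‖_{C¹} := sup_{s ∈ [0,2]} (|ψ(s)| + |ψ′(s)|). Let x_1, …, x_N be unit vectors in ℝ³, pairwise satisfying x_a ≠ −x_b, and let v_1, …, v_N ∈ ℝ³. Fix i, j and define F₂ := −((‖v_i‖² + ‖v_j‖²)/2) ‖x_i − x_j‖² + (ψ₀/N) Σ_{k=1}^N ⟨R_{x_k→x_i}(v_k) − R_{x_k→x_j}(v_k), x_i − x_j⟩ + Σ_{k=1}^N ((ψ_{ik} − ψ₀)/N) ⟨R_{x_k→x_i}(v_k) − v_i, x_i − x_j⟩ − Σ_{k=1}^N ((ψ_{jk} − ψ₀)/N) ⟨R_{x_k→x_j}(v_k) − v_j, x_i − x_j⟩ + (σ/(4N)) Σ_{k=1}^N ‖x_k − x_i‖² ‖x_i − x_j‖² + (σ/(4N)) Σ_{k=1}^N ‖x_k − x_j‖² ‖x_i − x_j‖². Let 𝒱 := max_k ‖v_k‖ and 𝒟ₓ :=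 max_{a,b} ‖x_a − x_b‖. Then |F₂| ≤ (𝒱 + 6‖ψ‖_{C¹}) 𝒱 𝒟ₓ² + ψ₀ 𝒱 𝒟ₓ³ + (σ/2) 𝒟ₓ⁴. -/

import Mathlib

open Matrix Set
open scoped BigOperators

noncomputable section

/-- The Euclidean norm on `ℝ³`, realized as `Fin 3 → ℝ`. -/
def enorm3 (a : Fin 3 → ℝ) : ℝ := Real.sqrt (a ⬝ᵥ a)

/-- The cross product on `ℝ³`. -/
def cross3 (a b : Fin 3 → ℝ) : Fin 3 → ℝ :=
  ![a 1 * b 2 - a 2 * b 1, a 2 * b 0 - a 0 * b 2, a 0 * b 1 - a 1 * b 0]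

/-- The unit vector `u = (z₁ × z₂)/‖z₁ × z₂‖`. -/
def uvec3 (z₁ z₂ : Fin 3 → ℝ) : Fin 3 → ℝ := (enorm3 (cross3 z₁ z₂))⁻¹ • cross3 z₁ z₂

/-- The rotation matrix `R(z₁,z₂) = ⟨z₁,z₂⟩ I + z₂ z₁ᵀ − z₁ z₂ᵀ + (1 − ⟨z₁,z₂⟩) u uᵀ`. -/
def rotMatrix (z₁ z₂ : Fin 3 → ℝ) : Matrix (Fin 3) (Fin 3) ℝ :=
  (z₁ ⬝ᵥ z₂) • (1 : Matrix (Fin 3) (Fin 3) ℝ)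
    + vecMulVec z₂ z₁ - vecMulVec z₁ z₂
    + (1 - z₁ ⬝ᵥ z₂) • vecMulVec (uvec3 z₁ z₂) (uvec3 z₁ z₂)

/-- `R_{z₁→z₂}(v)`, with the convention `R_{z→z} = I`. -/
def rotApply (z₁ z₂ v : Fin 3 → ℝ) : Fin 3 → ℝ :=
  if z₁ = z₂ then v else (rotMatrix z₁ z₂).mulVec v

section Helpers

lemma cross3_0 (a b : Fin 3 → ℝ) : cross3 a b 0 = a 1 * b 2 - a 2 * b 1 := rfl
lemma cross3_1 (a b : Fin 3 → ℝ) : cross3 a b 1 = a 2 * b 0 - a 0 * b 2 := rfl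
lemma cross3_2 (a b : Fin 3 → ℝ) : cross3 a b 2 = a 0 * b 1 - a 1 * b 0 := rfl

lemma dot_expand (a b : Fin 3 → ℝ) : a ⬝ᵥ b = a 0 * b 0 + a 1 * b 1 + a 2 * b 2 := by
  simp [dotProduct, Fin.sum_univ_three]

lemma dot_self_nonneg3 (a : Fin 3 → ℝ) : 0 ≤ a ⬝ᵥ a := by
  rw [dot_expand]; nlinarith [mul_self_nonneg (a 0), mul_self_nonneg (a 1), mul_self_nonneg (a 2)]

lemma enorm3_nonneg (a : Fin 3 → ℝ) : 0 ≤ enorm3 a := Real.sqrt_nonneg _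

lemma enorm3_sq (a : Fin 3 → ℝ) : enorm3 a ^ 2 = a ⬝ᵥ a := by
  rw [enorm3, Real.sq_sqrt (dot_self_nonneg3 a)]

lemma enorm3_zero : enorm3 (0 : Fin 3 → ℝ) = 0 := by
  simp [enorm3, dot_expand]

lemma dot_self_pos (a : Fin 3 → ℝ) (h : a ≠ 0) : 0 < a ⬝ᵥ a := by
  rcases lt_or_eq_of_le (dot_self_nonneg3 a) with h' | h'
  · exact h'
  · exfalso; apply h
    rw [dot_expand] at h'
    have h0 : a 0 * a 0 = 0 := by nlinarith [mul_self_nonneg (a 0), mul_self_nonneg (a 1), mul_self_nonneg (a 2)]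
    have h1 : a 1 * a 1 = 0 := by nlinarith [mul_self_nonneg (a 0), mul_self_nonneg (a 1), mul_self_nonneg (a 2)]
    have h2 : a 2 * a 2 = 0 := by nlinarith [mul_self_nonneg (a 0), mul_self_nonneg (a 1), mul_self_nonneg (a 2)]
    rw [mul_self_eq_zero] at h0 h1 h2
    funext k; fin_cases k <;> simp [h0, h1, h2]

lemma cs3 (a b : Fin 3 → ℝ) : |a ⬝ᵥ b| ≤ enorm3 a * enorm3 b := by
  have h : (a ⬝ᵥ b)^2 ≤ (a ⬝ᵥ a) * (b ⬝ᵥ b) := by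
    rw [dot_expand, dot_expand, dot_expand]
    nlinarith [sq_nonneg (a 0 * b 1 - a 1 * b 0), sq_nonneg (a 0 * b 2 - a 2 * b 0),
      sq_nonneg (a 1 * b 2 - a 2 * b 1)]
  calc |a ⬝ᵥ b| = Real.sqrt ((a ⬝ᵥ b)^2) := (Real.sqrt_sq_eq_abs _).symm
    _ ≤ Real.sqrt ((a ⬝ᵥ a) * (b ⬝ᵥ b)) := Real.sqrt_le_sqrt h
    _ = enorm3 a * enorm3 b := by rw [enorm3, enorm3, Real.sqrt_mul (dot_self_nonneg3 a)]

lemma lagrange3 (a b : Fin 3 → ℝ) :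
    cross3 a b ⬝ᵥ cross3 a b = (a ⬝ᵥ a) * (b ⬝ᵥ b) - (a ⬝ᵥ b)^2 := by
  simp [dot_expand, cross3_0, cross3_1, cross3_2]; ring

lemma cross3_dot_left (a b : Fin 3 → ℝ) : cross3 a b ⬝ᵥ a = 0 := by
  simp [dot_expand, cross3_0, cross3_1, cross3_2]; ring

lemma cross3_dot_right (a b : Fin 3 → ℝ) : cross3 a b ⬝ᵥ b = 0 := by
  simp [dot_expand, cross3_0, cross3_1, cross3_2]; ring

lemma gram3 (a b v : Fin 3 → ℝ) :
    (cross3 a b ⬝ᵥ v)^2 = (a ⬝ᵥ a) * (b ⬝ᵥ b) * (v ⬝ᵥ v) + 2 * (a ⬝ᵥ b) * (a ⬝ᵥ v) * (b ⬝ᵥ v)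
      - (a ⬝ᵥ v)^2 * (b ⬝ᵥ b) - (b ⬝ᵥ v)^2 * (a ⬝ᵥ a) - (v ⬝ᵥ v) * (a ⬝ᵥ b)^2 := by
  simp [dot_expand, cross3_0, cross3_1, cross3_2]; ring

lemma cross3_self (a : Fin 3 → ℝ) : cross3 a a = 0 := by
  funext k; fin_cases k <;> simp [cross3_0, cross3_1, cross3_2] <;> ring

lemma vecMulVec_mulVec (a b v : Fin 3 → ℝ) : (vecMulVec a b) *ᵥ v = (b ⬝ᵥ v) • a := by
  funext i
  simp [Matrix.mulVec, Matrix.vecMulVec_apply, dot_expand, dotProduct, Fin.sum_univ_three]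
  ring

lemma dot_sub_self (a b : Fin 3 → ℝ) :
    (a - b) ⬝ᵥ (a - b) = a ⬝ᵥ a - 2 * (a ⬝ᵥ b) + b ⬝ᵥ b := by
  simp [dot_expand]; ring

lemma dot_add_self (a b : Fin 3 → ℝ) :
    (a + b) ⬝ᵥ (a + b) = a ⬝ᵥ a + 2 * (a ⬝ᵥ b) + b ⬝ᵥ b := by
  simp [dot_expand]; ring

lemma unit_dot (z : Fin 3 → ℝ) (h : enorm3 z = 1) : z ⬝ᵥ z = 1 := by
  rw [← enorm3_sq, h]; norm_num

lemma dot_lt_one (z₁ z₂ : Fin 3 → ℝ) (h1 : enorm3 z₁ = 1) (h2 : enorm3 z₂ = 1)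
    (hne : z₁ ≠ z₂) : z₁ ⬝ᵥ z₂ < 1 := by
  have := dot_self_pos (z₁ - z₂) (sub_ne_zero.mpr hne)
  rw [dot_sub_self, unit_dot _ h1, unit_dot _ h2] at this
  linarith

lemma neg_one_lt_dot (z₁ z₂ : Fin 3 → ℝ) (h1 : enorm3 z₁ = 1) (h2 : enorm3 z₂ = 1)
    (hne : z₁ ≠ -z₂) : -1 < z₁ ⬝ᵥ z₂ := by
  have hne' : z₁ + z₂ ≠ 0 := by
    intro h; apply hne; rw [← sub_eq_zero]; rw [sub_neg_eq_add]; exact h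
  have := dot_self_pos (z₁ + z₂) hne'
  rw [dot_add_self, unit_dot _ h1, unit_dot _ h2] at this
  linarith

/-- The key closed formula for `rotApply`, valid also when `z₁ = z₂`. -/
lemma rotApply_formula (z₁ z₂ v : Fin 3 → ℝ) (h1 : enorm3 z₁ = 1) (h2 : enorm3 z₂ = 1)
    (hne : z₁ ≠ -z₂) :
    rotApply z₁ z₂ v = (z₁ ⬝ᵥ z₂) • v + (z₁ ⬝ᵥ v) • z₂ - (z₂ ⬝ᵥ v) • z₁
      + ((cross3 z₁ z₂ ⬝ᵥ v) / (1 + z₁ ⬝ᵥ z₂)) • cross3 z₁ z₂ := by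
  by_cases hz : z₁ = z₂
  · subst hz
    rw [rotApply, if_pos rfl, unit_dot _ h1, cross3_self]
    funext k
    simp
  · rw [rotApply, if_neg hz, rotMatrix]
    set c := z₁ ⬝ᵥ z₂ with hc
    have hclt : c < 1 := dot_lt_one _ _ h1 h2 hz
    have hcgt : -1 < c := neg_one_lt_dot _ _ h1 h2 hne
    have hwpos : 0 < cross3 z₁ z₂ ⬝ᵥ cross3 z₁ z₂ := by
      rw [lagrange3, unit_dot _ h1, unit_dot _ h2]; nlinarith
    set w := cross3 z₁ z₂ with hw
    set n := enorm3 w with hn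
    have hnpos : 0 < n := Real.sqrt_pos.mpr hwpos
    have hn2 : n ^ 2 = 1 - c ^ 2 := by
      rw [hn, enorm3_sq, hw, lagrange3, unit_dot _ h1, unit_dot _ h2]; ring
    have huv : uvec3 z₁ z₂ = n⁻¹ • w := rfl
    have hsc : (n⁻¹ • w) ⬝ᵥ v = n⁻¹ * (w ⬝ᵥ v) := by
      rw [smul_dotProduct]; simp
    simp only [add_mulVec, sub_mulVec, smul_mulVec, one_mulVec, huv,
      _root_.vecMulVec_mulVec, hsc, smul_smul]
    congr 1
    congr 1
    have hne1 : (1:ℝ) + c ≠ 0 := by linarith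
    have hnne : n ≠ 0 := ne_of_gt hnpos
    field_simp
    linear_combination (-(w ⬝ᵥ v)) * hn2

set_option maxRecDepth 100000 in
set_option maxHeartbeats 1000000 in
lemma rot_isometry (z₁ z₂ v : Fin 3 → ℝ) (h1 : enorm3 z₁ = 1) (h2 : enorm3 z₂ = 1)
    (hne : z₁ ≠ -z₂) :
    rotApply z₁ z₂ v ⬝ᵥ rotApply z₁ z₂ v = v ⬝ᵥ v := by
  rw [rotApply_formula _ _ _ h1 h2 hne]
  have hcgt : -1 < z₁ ⬝ᵥ z₂ := neg_one_lt_dot _ _ h1 h2 hne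
  set c := z₁ ⬝ᵥ z₂ with hc
  set w := cross3 z₁ z₂ with hw
  have hz1 : z₁ ⬝ᵥ z₁ = 1 := unit_dot _ h1
  have hz2 : z₂ ⬝ᵥ z₂ = 1 := unit_dot _ h2
  have hz21 : z₂ ⬝ᵥ z₁ = c := dotProduct_comm _ _
  have hw1 : w ⬝ᵥ z₁ = 0 := cross3_dot_left _ _
  have hw2 : w ⬝ᵥ z₂ = 0 := cross3_dot_right _ _
  have h1w : z₁ ⬝ᵥ w = 0 := by rw [dotProduct_comm]; exact hw1
  have h2w : z₂ ⬝ᵥ w = 0 := by rw [dotProduct_comm]; exact hw2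
  have hv1 : v ⬝ᵥ z₁ = z₁ ⬝ᵥ v := dotProduct_comm _ _
  have hv2 : v ⬝ᵥ z₂ = z₂ ⬝ᵥ v := dotProduct_comm _ _
  have hvw : v ⬝ᵥ w = w ⬝ᵥ v := dotProduct_comm _ _
  have hww : w ⬝ᵥ w = 1 - c^2 := by rw [hw, lagrange3, hz1, hz2]; ring
  have hg : (w ⬝ᵥ v)^2 = (v ⬝ᵥ v) + 2*c*(z₁ ⬝ᵥ v)*(z₂ ⬝ᵥ v) - (z₁ ⬝ᵥ v)^2 - (z₂ ⬝ᵥ v)^2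
      - (v ⬝ᵥ v)*c^2 := by
    rw [hw, gram3, hz1, hz2]; ring
  have hne1 : (1:ℝ) + c ≠ 0 := by linarith
  clear_value c w
  simp only [add_dotProduct, sub_dotProduct, dotProduct_add, dotProduct_sub,
    smul_dotProduct, dotProduct_smul, smul_eq_mul, hz1, hz2, hz21, hw1, hw2, h1w, h2w,
    hv1, hv2, hvw, hww]
  rw [← hc]
  set α := z₁ ⬝ᵥ v with ha
  set β := z₂ ⬝ᵥ v with hb
  set γ := w ⬝ᵥ v with hgam
  set q := v ⬝ᵥ v with hq
  clear_value α β γ q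
  field_simp
  linear_combination ((1+c)^2) * hg

lemma enorm3_rot (z₁ z₂ v : Fin 3 → ℝ) (h1 : enorm3 z₁ = 1) (h2 : enorm3 z₂ = 1)
    (hne : z₁ ≠ -z₂) : enorm3 (rotApply z₁ z₂ v) = enorm3 v := by
  rw [enorm3, enorm3, rot_isometry _ _ _ h1 h2 hne]

lemma enorm3_sub_sq (a b : Fin 3 → ℝ) (ha : enorm3 a = 1) (hb : enorm3 b = 1) :
    enorm3 (a - b) ^ 2 = 2 - 2 * (a ⬝ᵥ b) := by
  rw [enorm3_sq, dot_sub_self, unit_dot _ ha, unit_dot _ hb]; ring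

set_option maxHeartbeats 1000000 in
lemma rot_delta_dot (x y z v : Fin 3 → ℝ) (hx : enorm3 x = 1) (hy : enorm3 y = 1)
    (hz : enorm3 z = 1) (hxy : x ≠ -y) (hxz : x ≠ -z) :
    (rotApply x y v - rotApply x z v) ⬝ᵥ (y - z) =
      (x ⬝ᵥ v) * ((y - z) ⬝ᵥ (y - z))
      + (cross3 x y ⬝ᵥ v) * (cross3 x y ⬝ᵥ (y - z)) / (1 + x ⬝ᵥ y)
      - (cross3 x z ⬝ᵥ v) * (cross3 x z ⬝ᵥ (y - z)) / (1 + x ⬝ᵥ z) := by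
  rw [rotApply_formula _ _ _ hx hy hxy, rotApply_formula _ _ _ hx hz hxz]
  simp only [dot_expand, cross3_0, cross3_1, cross3_2, Pi.sub_apply, Pi.add_apply,
    Pi.smul_apply, smul_eq_mul]
  ring

lemma rot_delta_bound (x y z v : Fin 3 → ℝ) (hx : enorm3 x = 1) (hy : enorm3 y = 1)
    (hz : enorm3 z = 1) (hxy : x ≠ -y) (hxz : x ≠ -z) :
    |(rotApply x y v - rotApply x z v) ⬝ᵥ (y - z)| ≤
      enorm3 v * enorm3 (y - z) ^ 2
      + enorm3 v * enorm3 (y - z) * (enorm3 (x - y) ^ 2 + enorm3 (x - z) ^ 2) / 2 := by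
  rw [rot_delta_dot x y z v hx hy hz hxy hxz]
  have hc1 : -1 < x ⬝ᵥ y := neg_one_lt_dot _ _ hx hy hxy
  have hc2 : -1 < x ⬝ᵥ z := neg_one_lt_dot _ _ hx hz hxz
  have he1 : (0:ℝ) < 1 + x ⬝ᵥ y := by linarith
  have he2 : (0:ℝ) < 1 + x ⬝ᵥ z := by linarith
  have hA : |(x ⬝ᵥ v) * ((y - z) ⬝ᵥ (y - z))| ≤ enorm3 v * enorm3 (y - z) ^ 2 := by
    rw [abs_mul, ← enorm3_sq]
    have h1 : |x ⬝ᵥ v| ≤ enorm3 v := by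
      have := cs3 x v; rwa [hx, one_mul] at this
    have h2 : |enorm3 (y - z) ^ 2| = enorm3 (y - z) ^ 2 := abs_of_nonneg (by positivity)
    rw [h2]
    exact mul_le_mul_of_nonneg_right h1 (by positivity)
  have key : ∀ t : Fin 3 → ℝ, enorm3 t = 1 → x ≠ -t →
      |(cross3 x t ⬝ᵥ v) * (cross3 x t ⬝ᵥ (y - z)) / (1 + x ⬝ᵥ t)| ≤
        enorm3 v * enorm3 (y - z) * enorm3 (x - t) ^ 2 / 2 := by
    intro t ht hxt
    have hct : -1 < x ⬝ᵥ t := neg_one_lt_dot _ _ hx ht hxt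
    have het : (0:ℝ) < 1 + x ⬝ᵥ t := by linarith
    have hwv : |cross3 x t ⬝ᵥ v| ≤ enorm3 (cross3 x t) * enorm3 v := cs3 _ _
    have hwd : |cross3 x t ⬝ᵥ (y - z)| ≤ enorm3 (cross3 x t) * enorm3 (y - z) := cs3 _ _
    have hww : enorm3 (cross3 x t) ^ 2 = 1 - (x ⬝ᵥ t) ^ 2 := by
      rw [enorm3_sq, lagrange3, unit_dot _ hx, unit_dot _ ht]; ring
    have hsub : enorm3 (x - t) ^ 2 = 2 - 2 * (x ⬝ᵥ t) := enorm3_sub_sq _ _ hx ht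
    rw [abs_div, abs_of_pos het, abs_mul, div_le_iff₀ het]
    have hstep : |cross3 x t ⬝ᵥ v| * |cross3 x t ⬝ᵥ (y - z)| ≤
        (enorm3 (cross3 x t) ^ 2) * (enorm3 v * enorm3 (y - z)) := by
      have := mul_le_mul hwv hwd (abs_nonneg _) (mul_nonneg (enorm3_nonneg _) (enorm3_nonneg _))
      calc |cross3 x t ⬝ᵥ v| * |cross3 x t ⬝ᵥ (y - z)| ≤
          enorm3 (cross3 x t) * enorm3 v * (enorm3 (cross3 x t) * enorm3 (y - z)) := this
        _ = (enorm3 (cross3 x t) ^ 2) * (enorm3 v * enorm3 (y - z)) := by ring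
    calc |cross3 x t ⬝ᵥ v| * |cross3 x t ⬝ᵥ (y - z)|
        ≤ (enorm3 (cross3 x t) ^ 2) * (enorm3 v * enorm3 (y - z)) := hstep
      _ = (1 - (x ⬝ᵥ t)^2) * (enorm3 v * enorm3 (y - z)) := by rw [hww]
      _ = enorm3 v * enorm3 (y - z) * enorm3 (x - t) ^ 2 / 2 * (1 + x ⬝ᵥ t) := by
          rw [hsub]; ring
  have hB := key y hy hxy
  have hC := key z hz hxz
  calc |(x ⬝ᵥ v) * ((y - z) ⬝ᵥ (y - z))
      + (cross3 x y ⬝ᵥ v) * (cross3 x y ⬝ᵥ (y - z)) / (1 + x ⬝ᵥ y)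
      - (cross3 x z ⬝ᵥ v) * (cross3 x z ⬝ᵥ (y - z)) / (1 + x ⬝ᵥ z)|
      ≤ |(x ⬝ᵥ v) * ((y - z) ⬝ᵥ (y - z))
        + (cross3 x y ⬝ᵥ v) * (cross3 x y ⬝ᵥ (y - z)) / (1 + x ⬝ᵥ y)|
        + |(cross3 x z ⬝ᵥ v) * (cross3 x z ⬝ᵥ (y - z)) / (1 + x ⬝ᵥ z)| := abs_sub _ _
    _ ≤ |(x ⬝ᵥ v) * ((y - z) ⬝ᵥ (y - z))|
        + |(cross3 x y ⬝ᵥ v) * (cross3 x y ⬝ᵥ (y - z)) / (1 + x ⬝ᵥ y)|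
        + |(cross3 x z ⬝ᵥ v) * (cross3 x z ⬝ᵥ (y - z)) / (1 + x ⬝ᵥ z)| := by
          have := abs_add_le ((x ⬝ᵥ v) * ((y - z) ⬝ᵥ (y - z)))
            ((cross3 x y ⬝ᵥ v) * (cross3 x y ⬝ᵥ (y - z)) / (1 + x ⬝ᵥ y))
          linarith
    _ ≤ enorm3 v * enorm3 (y - z) ^ 2
        + enorm3 v * enorm3 (y - z) * (enorm3 (x - y) ^ 2 + enorm3 (x - z) ^ 2) / 2 := by
          have h1 := hB
          have h2 := hC
          linarith [hA]

end Helpers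

set_option maxHeartbeats 2000000 in
/-- Bound on the inhomogeneous term `F₂`:
`|F₂| ≤ (𝒱 + 6‖ψ‖_{C¹}) 𝒱 𝒟ₓ² + ψ₀ 𝒱 𝒟ₓ³ + (σ/2) 𝒟ₓ⁴`. -/
theorem F2_bound (N : ℕ) (hN : 1 ≤ N) (σ : ℝ) (hσ : 0 < σ)
    (ψ ψ' : ℝ → ℝ)
    (hψ' : ∀ s ∈ Set.Icc (0:ℝ) 2, HasDerivWithinAt ψ (ψ' s) (Set.Icc 0 2) s)
    (hψ'c : ContinuousOn ψ' (Set.Icc 0 2))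
    (hψnn : ∀ s ∈ Set.Icc (0:ℝ) 2, 0 ≤ ψ s)
    (hψanti : StrictAntiOn ψ (Set.Icc 0 2)) (hψ2 : ψ 2 = 0)
    (C1 : ℝ) (hC1 : IsLUB ((fun s => |ψ s| + |ψ' s|) '' Set.Icc (0:ℝ) 2) C1)
    (x v : Fin N → Fin 3 → ℝ)
    (hx : ∀ a, enorm3 (x a) = 1) (hanti : ∀ a b, x a ≠ -(x b))
    (i j : Fin N) (V Dx : ℝ)
    (hV : IsGreatest (Set.range fun k => enorm3 (v k)) V)
    (hDx : IsGreatest (Set.range fun p : Fin N × Fin N => enorm3 (x p.1 - x p.2)) Dx)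
    (F₂ : ℝ)
    (hF₂ : F₂ = -(((enorm3 (v i))^2 + (enorm3 (v j))^2) / 2) * (enorm3 (x i - x j))^2
      + ψ 0 / N * ∑ k,
          ((rotApply (x k) (x i) (v k) - rotApply (x k) (x j) (v k)) ⬝ᵥ (x i - x j))
      + (∑ k, (ψ (enorm3 (x i - x k)) / N - ψ (enorm3 (x i - x i)) / N) *
          ((rotApply (x k) (x i) (v k) - v i) ⬝ᵥ (x i - x j)))
      - (∑ k, (ψ (enorm3 (x j - x k)) / N - ψ (enorm3 (x j - x j)) / N) *
          ((rotApply (x k) (x j) (v k) - v j) ⬝ᵥ (x i - x j)))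
      + σ / (4 * N) * ∑ k, (enorm3 (x k - x i))^2 * (enorm3 (x i - x j))^2
      + σ / (4 * N) * ∑ k, (enorm3 (x k - x j))^2 * (enorm3 (x i - x j))^2) :
    |F₂| ≤ (V + 6 * C1) * V * Dx^2 + ψ 0 * V * Dx^3 + σ / 2 * Dx^4 := by
  have hN0 : (0:ℝ) < N := by
    have : (1:ℝ) ≤ N := by exact_mod_cast hN
    linarith
  have hVk : ∀ k, enorm3 (v k) ≤ V := fun k => hV.2 ⟨k, rfl⟩
  have hV0 : (0:ℝ) ≤ V := le_trans (enorm3_nonneg (v i)) (hVk i)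
  have hDab : ∀ a b, enorm3 (x a - x b) ≤ Dx := fun a b => hDx.2 ⟨(a, b), rfl⟩
  have hDx0 : (0:ℝ) ≤ Dx := le_trans (enorm3_nonneg _) (hDab i i)
  have hmem : ∀ a b : Fin N, enorm3 (x a - x b) ∈ Set.Icc (0:ℝ) 2 := by
    intro a b
    refine ⟨enorm3_nonneg _, ?_⟩
    have hsq : enorm3 (x a - x b)^2 = 2 - 2 * (x a ⬝ᵥ x b) := enorm3_sub_sq _ _ (hx a) (hx b)
    have hcs := cs3 (x a) (x b)
    rw [hx a, hx b, one_mul] at hcs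
    have h1 := (abs_le.mp hcs).1
    nlinarith [enorm3_nonneg (x a - x b)]
  have hψ0 : 0 ≤ ψ 0 := hψnn 0 ⟨le_refl 0, by norm_num⟩
  have hC1ψ0 : ψ 0 ≤ C1 := by
    have h : |ψ 0| + |ψ' 0| ≤ C1 := hC1.1 ⟨0, ⟨le_refl 0, by norm_num⟩, rfl⟩
    have h1 := abs_nonneg (ψ' 0)
    have h2 := le_abs_self (ψ 0)
    linarith
  have hC10 : 0 ≤ C1 := le_trans hψ0 hC1ψ0
  have hderiv_le : ∀ s ∈ Set.Icc (0:ℝ) 2, ‖ψ' s‖ ≤ C1 := by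
    intro s hs
    have h : |ψ s| + |ψ' s| ≤ C1 := hC1.1 ⟨s, hs, rfl⟩
    have h1 := abs_nonneg (ψ s)
    rw [Real.norm_eq_abs]
    linarith
  have hlip : ∀ s ∈ Set.Icc (0:ℝ) 2, |ψ s - ψ 0| ≤ C1 * s := by
    intro s hs
    have h := Convex.norm_image_sub_le_of_norm_hasDerivWithin_le hψ' hderiv_le
      (convex_Icc (0:ℝ) 2) (⟨le_refl 0, by norm_num⟩ : (0:ℝ) ∈ Set.Icc (0:ℝ) 2) hs
    rw [Real.norm_eq_abs, Real.norm_eq_abs, sub_zero] at h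
    calc |ψ s - ψ 0| ≤ C1 * |s| := h
      _ = C1 * s := by rw [abs_of_nonneg hs.1]
  have hψcoef : ∀ a b : Fin N, |ψ (enorm3 (x a - x b)) - ψ 0| ≤ C1 * Dx := by
    intro a b
    calc |ψ (enorm3 (x a - x b)) - ψ 0| ≤ C1 * enorm3 (x a - x b) := hlip _ (hmem a b)
      _ ≤ C1 * Dx := mul_le_mul_of_nonneg_left (hDab a b) hC10
  -- squares bounds
  have hsqD : ∀ a b : Fin N, enorm3 (x a - x b)^2 ≤ Dx^2 := by
    intro a b
    nlinarith [enorm3_nonneg (x a - x b), hDab a b]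
  -- Term 1
  have hT1 : |-(((enorm3 (v i))^2 + (enorm3 (v j))^2) / 2) * (enorm3 (x i - x j))^2|
      ≤ V * V * Dx^2 := by
    have e1 : enorm3 (v i)^2 ≤ V^2 := by nlinarith [enorm3_nonneg (v i), hVk i]
    have e2 : enorm3 (v j)^2 ≤ V^2 := by nlinarith [enorm3_nonneg (v j), hVk j]
    have e3 := hsqD i j
    rw [abs_mul, abs_neg, abs_of_nonneg (by positivity : (0:ℝ) ≤ ((enorm3 (v i))^2 + (enorm3 (v j))^2) / 2),
      abs_of_nonneg (by positivity : (0:ℝ) ≤ (enorm3 (x i - x j))^2)]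
    nlinarith [sq_nonneg (enorm3 (x i - x j)), sq_nonneg V]
  -- Term 2 summand bound
  have hT2k : ∀ k, |(rotApply (x k) (x i) (v k) - rotApply (x k) (x j) (v k)) ⬝ᵥ (x i - x j)|
      ≤ V * Dx^2 + V * Dx^3 := by
    intro k
    have h := rot_delta_bound (x k) (x i) (x j) (v k) (hx k) (hx i) (hx j)
      (hanti k i) (hanti k j)
    have h1 : enorm3 (v k) ≤ V := hVk k
    have hd := hDab i j
    have e2 := hsqD k i
    have e3 := hsqD k j
    have ed2 := hsqD i j
    have nv := enorm3_nonneg (v k)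
    have nd := enorm3_nonneg (x i - x j)
    have e5 : enorm3 (v k) * enorm3 (x i - x j)^2 ≤ V * Dx^2 :=
      mul_le_mul h1 ed2 (sq_nonneg _) hV0
    have e4 : enorm3 (v k) * enorm3 (x i - x j) ≤ V * Dx :=
      mul_le_mul h1 hd nd hV0
    have e6 : enorm3 (v k) * enorm3 (x i - x j)
        * (enorm3 (x k - x i)^2 + enorm3 (x k - x j)^2) / 2 ≤ V * Dx^3 := by
      have s1 : (enorm3 (x k - x i)^2 + enorm3 (x k - x j)^2) / 2 ≤ Dx^2 := by linarith
      have s2 : (0:ℝ) ≤ (enorm3 (x k - x i)^2 + enorm3 (x k - x j)^2) / 2 := by positivity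
      calc enorm3 (v k) * enorm3 (x i - x j) * (enorm3 (x k - x i)^2 + enorm3 (x k - x j)^2) / 2
          = (enorm3 (v k) * enorm3 (x i - x j)) *
            ((enorm3 (x k - x i)^2 + enorm3 (x k - x j)^2) / 2) := by ring
        _ ≤ (V * Dx) * Dx^2 := mul_le_mul e4 s1 s2 (mul_nonneg hV0 hDx0)
        _ = V * Dx^3 := by ring
    linarith [h]
  -- Terms 3/4 summand bounds
  have hdotk : ∀ (k a : Fin N), |(rotApply (x k) (x a) (v k) - v a) ⬝ᵥ (x i - x j)|
      ≤ 2 * (V * Dx) := by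
    intro k a
    rw [sub_dotProduct]
    have h1 : |rotApply (x k) (x a) (v k) ⬝ᵥ (x i - x j)| ≤ V * Dx := by
      have hcs := cs3 (rotApply (x k) (x a) (v k)) (x i - x j)
      rw [enorm3_rot _ _ _ (hx k) (hx a) (hanti k a)] at hcs
      calc |rotApply (x k) (x a) (v k) ⬝ᵥ (x i - x j)|
          ≤ enorm3 (v k) * enorm3 (x i - x j) := hcs
        _ ≤ V * Dx := mul_le_mul (hVk k) (hDab i j) (enorm3_nonneg _) hV0
    have h2 : |v a ⬝ᵥ (x i - x j)| ≤ V * Dx := by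
      calc |v a ⬝ᵥ (x i - x j)| ≤ enorm3 (v a) * enorm3 (x i - x j) := cs3 _ _
        _ ≤ V * Dx := mul_le_mul (hVk a) (hDab i j) (enorm3_nonneg _) hV0
    calc |rotApply (x k) (x a) (v k) ⬝ᵥ (x i - x j) - v a ⬝ᵥ (x i - x j)|
        ≤ |rotApply (x k) (x a) (v k) ⬝ᵥ (x i - x j)| + |v a ⬝ᵥ (x i - x j)| := abs_sub _ _
      _ ≤ 2 * (V * Dx) := by linarith
  have hT34k : ∀ (k a : Fin N), |(ψ (enorm3 (x a - x k)) / N - ψ (enorm3 (x a - x a)) / N) *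
      ((rotApply (x k) (x a) (v k) - v a) ⬝ᵥ (x i - x j))|
      ≤ (C1 * Dx) * (2 * (V * Dx)) / N := by
    intro k a
    rw [abs_mul]
    have hcoef : |ψ (enorm3 (x a - x k)) / N - ψ (enorm3 (x a - x a)) / N| ≤ C1 * Dx / N := by
      rw [sub_self, enorm3_zero, div_sub_div_same, abs_div, abs_of_pos hN0]
      gcongr
      exact hψcoef a k
    have hdot := hdotk k a
    calc |ψ (enorm3 (x a - x k)) / N - ψ (enorm3 (x a - x a)) / N| *
        |(rotApply (x k) (x a) (v k) - v a) ⬝ᵥ (x i - x j)|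
        ≤ (C1 * Dx / N) * (2 * (V * Dx)) :=
          mul_le_mul hcoef hdot (abs_nonneg _) (by positivity)
      _ = (C1 * Dx) * (2 * (V * Dx)) / N := by ring
  -- Terms 5/6 summand bounds
  have hT56k : ∀ (k a : Fin N), enorm3 (x k - x a)^2 * enorm3 (x i - x j)^2 ≤ Dx^2 * Dx^2 := by
    intro k a
    have := hsqD k a
    have := hsqD i j
    nlinarith [sq_nonneg (enorm3 (x k - x a)), sq_nonneg (enorm3 (x i - x j)), sq_nonneg Dx]
  -- sum bounds
  have sumbound : ∀ (f : Fin N → ℝ) (B : ℝ), (∀ k, |f k| ≤ B) → |∑ k, f k| ≤ N * B := by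
    intro f B hB
    calc |∑ k, f k| ≤ ∑ k, |f k| := Finset.abs_sum_le_sum_abs _ _
      _ ≤ ∑ _k : Fin N, B := Finset.sum_le_sum (fun k _ => hB k)
      _ = N * B := by rw [Finset.sum_const, Finset.card_univ, Fintype.card_fin, nsmul_eq_mul]
  have hT2 : |ψ 0 / N * ∑ k,
      ((rotApply (x k) (x i) (v k) - rotApply (x k) (x j) (v k)) ⬝ᵥ (x i - x j))|
      ≤ ψ 0 * V * Dx^2 + ψ 0 * V * Dx^3 := by
    have hsum := sumbound _ _ hT2k
    rw [abs_mul, abs_of_nonneg (div_nonneg hψ0 (le_of_lt hN0))]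
    calc ψ 0 / N * |∑ k, ((rotApply (x k) (x i) (v k) - rotApply (x k) (x j) (v k)) ⬝ᵥ (x i - x j))|
        ≤ ψ 0 / N * (N * (V * Dx^2 + V * Dx^3)) := by
          apply mul_le_mul_of_nonneg_left hsum (div_nonneg hψ0 (le_of_lt hN0))
      _ = ψ 0 * V * Dx^2 + ψ 0 * V * Dx^3 := by field_simp
  have hT3 : |∑ k, (ψ (enorm3 (x i - x k)) / N - ψ (enorm3 (x i - x i)) / N) *
      ((rotApply (x k) (x i) (v k) - v i) ⬝ᵥ (x i - x j))| ≤ 2 * C1 * V * Dx^2 := by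
    have hsum := sumbound _ _ (fun k => hT34k k i)
    calc _ ≤ (N:ℝ) * ((C1 * Dx) * (2 * (V * Dx)) / N) := hsum
      _ = 2 * C1 * V * Dx^2 := by field_simp
  have hT4 : |∑ k, (ψ (enorm3 (x j - x k)) / N - ψ (enorm3 (x j - x j)) / N) *
      ((rotApply (x k) (x j) (v k) - v j) ⬝ᵥ (x i - x j))| ≤ 2 * C1 * V * Dx^2 := by
    have hsum := sumbound _ _ (fun k => hT34k k j)
    calc _ ≤ (N:ℝ) * ((C1 * Dx) * (2 * (V * Dx)) / N) := hsum
      _ = 2 * C1 * V * Dx^2 := by field_simp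
  have hT56 : ∀ a : Fin N, |σ / (4 * N) * ∑ k, (enorm3 (x k - x a))^2 * (enorm3 (x i - x j))^2|
      ≤ σ / 4 * Dx^4 := by
    intro a
    have hsum := sumbound _ _ (fun k => by
      rw [abs_of_nonneg (by positivity : (0:ℝ) ≤ (enorm3 (x k - x a))^2 * (enorm3 (x i - x j))^2)]
      exact hT56k k a)
    rw [abs_mul, abs_of_nonneg (by positivity : (0:ℝ) ≤ σ / (4 * N))]
    calc σ / (4 * N) * |∑ k, (enorm3 (x k - x a))^2 * (enorm3 (x i - x j))^2|
        ≤ σ / (4 * N) * (N * (Dx^2 * Dx^2)) := by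
          apply mul_le_mul_of_nonneg_left hsum (by positivity)
      _ = σ / 4 * Dx^4 := by field_simp
  have hT5 := hT56 i
  have hT6 := hT56 j
  rw [hF₂]
  have habs : ∀ a b c d e f : ℝ, |a + b + c - d + e + f| ≤ |a| + |b| + |c| + |d| + |e| + |f| := by
    intro a b c d e f
    calc |a + b + c - d + e + f| ≤ |a + b + c - d + e| + |f| := abs_add_le _ _
      _ ≤ |a + b + c - d| + |e| + |f| := by linarith [abs_add_le (a + b + c - d) e]
      _ ≤ |a + b + c| + |d| + |e| + |f| := by linarith [abs_sub (a + b + c) d]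
      _ ≤ |a + b| + |c| + |d| + |e| + |f| := by linarith [abs_add_le (a + b) c]
      _ ≤ |a| + |b| + |c| + |d| + |e| + |f| := by linarith [abs_add_le a b]
  have hbig := habs
    (-(((enorm3 (v i))^2 + (enorm3 (v j))^2) / 2) * (enorm3 (x i - x j))^2)
    (ψ 0 / N * ∑ k, ((rotApply (x k) (x i) (v k) - rotApply (x k) (x j) (v k)) ⬝ᵥ (x i - x j)))
    (∑ k, (ψ (enorm3 (x i - x k)) / N - ψ (enorm3 (x i - x i)) / N) *
      ((rotApply (x k) (x i) (v k) - v i) ⬝ᵥ (x i - x j)))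
    (∑ k, (ψ (enorm3 (x j - x k)) / N - ψ (enorm3 (x j - x j)) / N) *
      ((rotApply (x k) (x j) (v k) - v j) ⬝ᵥ (x i - x j)))
    (σ / (4 * N) * ∑ k, (enorm3 (x k - x i))^2 * (enorm3 (x i - x j))^2)
    (σ / (4 * N) * ∑ k, (enorm3 (x k - x j))^2 * (enorm3 (x i - x j))^2)
  have hslack : ψ 0 * V * Dx^2 ≤ 2 * C1 * V * Dx^2 := by
    have h := mul_le_mul_of_nonneg_right (show ψ 0 ≤ 2 * C1 by linarith)
      (mul_nonneg hV0 (sq_nonneg Dx))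
    calc ψ 0 * V * Dx^2 = ψ 0 * (V * Dx^2) := by ring
      _ ≤ 2 * C1 * (V * Dx^2) := h
      _ = 2 * C1 * V * Dx^2 := by ring
  have hexp : (V + 6 * C1) * V * Dx^2 + ψ 0 * V * Dx^3 + σ / 2 * Dx^4
      = V * V * Dx^2 + 6 * C1 * V * Dx^2 + ψ 0 * V * Dx^3 + σ / 2 * Dx^4 := by ring
  rw [hexp]
  linarith [hbig, hT1, hT2, hT3, hT4, hT5, hT6, hslack]
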